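/- If there exists a Luzin set in Baire space ℕ → ℕ, then property (*) holds: there exists a sequence (φₙ : ω₁ → ω₁)ₙ∈ℕ such that for every subset I of ω₁ of cardinality ℵ₁ there exists n with φₙ '' I = ω₁. -/

import Mathlib

open Cardinal Set

namespace LuzinAux

noncomputable section

open scoped Classical

open Ordinal

/-- The first uncountable ordinal. -/
def ω₁o : Ordinal.{0} := (Cardinal.aleph 1).ord

lemma omega1o_pos : (0 : Ordinal) < ω₁o := by
  rw [ω₁o, Cardinal.lt_ord]
  simpa using (aleph0_pos.trans Cardinal.aleph0_lt_aleph_one)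

lemma isLimit_omega1o : Order.IsSuccLimit ω₁o := Cardinal.isSuccLimit_ord (Cardinal.aleph0_le_aleph 1)

lemma countable_Iio_of_lt {α : Ordinal.{0}} (hα : α < ω₁o) : (Set.Iio α).Countable := by
  rw [countable_iff_lt_aleph_one, Ordinal.mk_Iio_ordinal]
  have h1 : α.card < Cardinal.aleph 1 := Cardinal.lt_ord.mp hα
  have := Cardinal.lift_lt.{0, 1}.mpr h1
  simpa using this

/-- `g` is a "good" function at stage `α` relative to the family `E`:
injective on `Iio α`, co-infinite range there, and coherent with all earlier stages. -/
def IsGoodAt (E : Ordinal → Ordinal → ℕ) (α : Ordinal) (g : Ordinal → ℕ) : Prop :=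
  Set.InjOn g (Set.Iio α) ∧ {n : ℕ | ∀ ξ < α, g ξ ≠ n}.Infinite ∧
    ∀ β < α, {ξ : Ordinal | ξ < β ∧ g ξ ≠ E β ξ}.Finite

lemma isGoodAt_congr {E E' : Ordinal → Ordinal → ℕ} {α : Ordinal} {g : Ordinal → ℕ}
    (h : ∀ β < α, E β = E' β) (hg : IsGoodAt E α g) : IsGoodAt E' α g := by
  refine ⟨hg.1, hg.2.1, fun β hβ => ?_⟩
  have := hg.2.2 β hβ
  rwa [h β hβ] at this

lemma exists_injOn_into {C : Set Ordinal} (hC : C.Finite) {G : Set ℕ} (hG : G.Infinite) :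
    ∃ w : Ordinal → ℕ, Set.InjOn w C ∧ ∀ ξ ∈ C, w ξ ∈ G := by
  haveI : Finite ↥C := hC.to_subtype
  obtain ⟨ι, hι⟩ := exists_injective_nat ↥C
  let ν := hG.natEmbedding
  classical
  refine ⟨fun ξ => if h : ξ ∈ C then (ν (ι ⟨ξ, h⟩)).1 else 0, ?_, ?_⟩
  · intro a ha b hb hab
    simp only [dif_pos ha, dif_pos hb] at hab
    have := ν.injective (Subtype.ext hab)
    have := hι this
    exact congrArg Subtype.val this
  · intro ξ hξ
    simp only [dif_pos hξ]
    exact (ν (ι ⟨ξ, hξ⟩)).2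

/-- The invariant carried along the fusion at a limit stage. -/
def Inv (E : Ordinal → Ordinal → ℕ) (A : ℕ → Ordinal) (k : ℕ)
    (p : (Ordinal → ℕ) × Finset ℕ) : Prop :=
  Set.InjOn p.1 (Set.Iio (A k)) ∧
  {ξ : Ordinal | ξ < A k ∧ p.1 ξ ≠ E (A k) ξ}.Finite ∧
  (∀ n ∈ p.2, ∀ ξ < A k, p.1 ξ ≠ n) ∧
  k ≤ p.2.card

lemma step_exists (E : Ordinal → Ordinal → ℕ) (A : ℕ → Ordinal)
    (hAs : ∀ k, A k < A (k + 1))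
    (hGk : ∀ k, IsGoodAt E (A k) (E (A k)))
    (k : ℕ) (p : (Ordinal → ℕ) × Finset ℕ) (hp : Inv E A k p) :
    ∃ q, Inv E A (k + 1) q ∧ (∀ ξ < A k, q.1 ξ = p.1 ξ) ∧ p.2 ⊆ q.2 := by
  classical
  obtain ⟨f, R⟩ := p
  obtain ⟨hinj, hdiff, hdisj, hcard⟩ := hp
  dsimp only at hinj hdiff hdisj hcard
  set c := A k with hc
  set c' := A (k + 1) with hc'
  have hcc' : c < c' := hAs k
  obtain ⟨G1, G2, G3⟩ := hGk (k + 1)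
  have G3coh : {ξ : Ordinal | ξ < c ∧ E c' ξ ≠ E c ξ}.Finite := G3 c hcc'
  -- the set where f differs from E c' below c
  have hD₀ : {ξ : Ordinal | ξ < c ∧ f ξ ≠ E c' ξ}.Finite := by
    refine (hdiff.union G3coh).subset ?_
    intro ξ ⟨h1, h2⟩
    by_cases h : f ξ = E c ξ
    · exact Or.inr ⟨h1, fun he => h2 (h.trans he.symm)⟩
    · exact Or.inl ⟨h1, h⟩
  set D₀ : Set Ordinal := {ξ : Ordinal | ξ < c ∧ f ξ ≠ E c' ξ} with hD₀def
  -- conflict set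
  set C : Set Ordinal := {ξ : Ordinal | c ≤ ξ ∧ ξ < c' ∧ E c' ξ ∈ f '' (Set.Iio c) ∪ ↑R}
    with hCdef
  have hCval : ∀ ξ ∈ C, E c' ξ ∈ f '' D₀ ∪ ↑R := by
    rintro ξ ⟨hcξ, hξc', hmem⟩
    rcases hmem with hmem | hmem
    · obtain ⟨ζ, hζc, hζ⟩ := hmem
      by_cases hζD : ζ ∈ D₀
      · exact Or.inl ⟨ζ, hζD, hζ⟩
      · have : f ζ = E c' ζ := by
          by_contra hne
          exact hζD ⟨hζc, hne⟩
        have heq : E c' ζ = E c' ξ := this ▸ hζ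
        have : ζ = ξ := G1 (lt_trans hζc hcc') hξc' heq
        exact absurd (this ▸ hζc) (not_lt.mpr hcξ)
    · exact Or.inr hmem
  have hCfin : C.Finite := by
    have himg : (E c' '' C).Finite := by
      refine (((hD₀.image f).union R.finite_toSet)).subset ?_
      rintro n ⟨ξ, hξ, rfl⟩
      exact hCval ξ hξ
    refine Set.Finite.of_finite_image himg ?_
    intro a ha b hb hab
    exact G1 ha.2.1 hb.2.1 hab
  -- fresh values
  set G : Set ℕ := {n : ℕ | ∀ ξ < c', E c' ξ ≠ n} \ (f '' D₀ ∪ ↑R) with hGdef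
  have hGinf : G.Infinite := G2.diff ((hD₀.image f).union R.finite_toSet)
  have hGf : ∀ ζ, ζ < c → f ζ ∉ G := by
    intro ζ hζ hmem
    by_cases hζD : ζ ∈ D₀
    · exact hmem.2 (Or.inl ⟨ζ, hζD, rfl⟩)
    · have hfe : f ζ = E c' ζ := by
        by_contra hne
        exact hζD ⟨hζ, hne⟩
      exact hmem.1 ζ (lt_trans hζ hcc') hfe.symm
  obtain ⟨w, hwinj, hwG⟩ := exists_injOn_into hCfin hGinf
  set f' : Ordinal → ℕ := fun ξ => if ξ < c then f ξ else if ξ ∈ C then w ξ else E c' ξ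
    with hf'def
  obtain ⟨r, hrG, hrw⟩ : ∃ r, r ∈ G ∧ r ∉ w '' C := by
    obtain ⟨r, hr⟩ := (hGinf.diff (hCfin.image w)).nonempty
    exact ⟨r, hr.1, hr.2⟩
  have hrR : r ∉ R := fun h => hrG.2 (Or.inr h)
  -- evaluation lemmas
  have vF : ∀ ξ, ξ < c → f' ξ = f ξ := fun ξ h => if_pos h
  have vW : ∀ ξ ∈ C, f' ξ = w ξ := by
    intro ξ hξ
    have : ¬ ξ < c := not_lt.mpr hξ.1
    simp only [hf'def, if_neg this, if_pos hξ]
  have vE : ∀ ξ, ¬ ξ < c → ξ ∉ C → f' ξ = E c' ξ := by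
    intro ξ h1 h2
    simp only [hf'def, if_neg h1, if_neg h2]
  have hGnotE : ∀ n ∈ G, ∀ ξ < c', E c' ξ ≠ n := fun n hn => hn.1
  have hGnotR : ∀ n ∈ G, n ∉ R := fun n hn h => hn.2 (Or.inr h)
  -- injectivity of f' on Iio c'
  have hinj' : Set.InjOn f' (Set.Iio c') := by
    -- classify
    have key : ∀ ξ₁ ∈ Set.Iio c', ∀ ξ₂ ∈ Set.Iio c', f' ξ₁ = f' ξ₂ → ξ₁ < c →
        ¬ ξ₂ < c → False := by
      intro ξ₁ h₁ ξ₂ h₂ heq hlt₁ hlt₂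
      by_cases hC₂ : ξ₂ ∈ C
      · rw [vF _ hlt₁, vW _ hC₂] at heq
        exact hGf ξ₁ hlt₁ (heq ▸ hwG ξ₂ hC₂)
      · rw [vF _ hlt₁, vE _ hlt₂ hC₂] at heq
        exact hC₂ ⟨not_lt.mp hlt₂, h₂, Or.inl ⟨ξ₁, hlt₁, heq⟩⟩
    intro ξ₁ h₁ ξ₂ h₂ heq
    by_cases hlt₁ : ξ₁ < c <;> by_cases hlt₂ : ξ₂ < c
    · rw [vF _ hlt₁, vF _ hlt₂] at heq
      exact hinj hlt₁ hlt₂ heq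
    · exact absurd (key ξ₁ h₁ ξ₂ h₂ heq hlt₁ hlt₂) not_false
    · exact absurd (key ξ₂ h₂ ξ₁ h₁ heq.symm hlt₂ hlt₁) not_false
    · by_cases hC₁ : ξ₁ ∈ C <;> by_cases hC₂ : ξ₂ ∈ C
      · rw [vW _ hC₁, vW _ hC₂] at heq
        exact hwinj hC₁ hC₂ heq
      · rw [vW _ hC₁, vE _ hlt₂ hC₂] at heq
        exact absurd heq.symm (hGnotE _ (hwG ξ₁ hC₁) ξ₂ h₂)
      · rw [vE _ hlt₁ hC₁, vW _ hC₂] at heq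
        exact absurd heq (hGnotE _ (hwG ξ₂ hC₂) ξ₁ h₁)
      · rw [vE _ hlt₁ hC₁, vE _ hlt₂ hC₂] at heq
        exact G1 h₁ h₂ heq
  refine ⟨(f', insert r R), ⟨hinj', ?_, ?_, ?_⟩, fun ξ h => vF ξ h, Finset.subset_insert _ _⟩
  · -- difference with E c' is finite
    refine (hD₀.union hCfin).subset ?_
    rintro ξ ⟨hξ, hne⟩
    dsimp only at hne
    by_cases hlt : ξ < c
    · rw [vF _ hlt] at hne
      exact Or.inl ⟨hlt, hne⟩
    · by_cases hC : ξ ∈ C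
      · exact Or.inr hC
      · exact absurd (vE _ hlt hC) hne
  · -- disjointness from insert r R
    intro n hn ξ hξ
    dsimp only
    rcases Finset.mem_insert.mp hn with rfl | hnR
    · by_cases hlt : ξ < c
      · rw [vF _ hlt]
        intro h
        exact hGf ξ hlt (h ▸ hrG)
      · by_cases hC : ξ ∈ C
        · rw [vW _ hC]
          intro h
          exact hrw ⟨ξ, hC, h⟩
        · rw [vE _ hlt hC]
          exact hGnotE _ hrG ξ hξ
    · by_cases hlt : ξ < c
      · rw [vF _ hlt]
        exact hdisj n hnR ξ hlt
      · by_cases hC : ξ ∈ C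
        · rw [vW _ hC]
          intro h
          exact hGnotR _ (hwG ξ hC) (h ▸ hnR)
        · rw [vE _ hlt hC]
          intro h
          exact hC ⟨not_lt.mp hlt, hξ, Or.inr (by exact_mod_cast h ▸ hnR)⟩
  · -- cardinality
    dsimp only
    rw [Finset.card_insert_of_notMem hrR]
    omega

lemma fusion (E : Ordinal → Ordinal → ℕ) (α : Ordinal) (A : ℕ → Ordinal)
    (hAlt : ∀ k, A k < α) (hAs : ∀ k, A k < A (k + 1))
    (hAcof : ∀ ξ < α, ∃ k, ξ < A k)
    (hgood : ∀ β < α, IsGoodAt E β (E β)) : ∃ g, IsGoodAt E α g := by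
  classical
  have hGk : ∀ k, IsGoodAt E (A k) (E (A k)) := fun k => hgood _ (hAlt k)
  have hbase : Inv E A 0 (E (A 0), ∅) := by
    refine ⟨(hGk 0).1, ?_, by simp, by simp⟩
    have : {ξ : Ordinal | ξ < A 0 ∧ E (A 0) ξ ≠ E (A 0) ξ} = ∅ := by
      ext ξ; simp
    rw [this]; exact Set.finite_empty
  -- the fusion sequence
  let seq : ℕ → (Ordinal → ℕ) × Finset ℕ := fun k =>
    Nat.rec (E (A 0), ∅)
      (fun k p => if h : Inv E A k p then (step_exists E A hAs hGk k p h).choose else p) k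
  have hseq_succ : ∀ k, seq (k + 1) =
      if h : Inv E A k (seq k) then (step_exists E A hAs hGk k (seq k) h).choose else seq k :=
    fun k => rfl
  have hInv : ∀ k, Inv E A k (seq k) := by
    intro k
    induction k with
    | zero => exact hbase
    | succ k ih =>
      rw [hseq_succ, dif_pos ih]
      exact (step_exists E A hAs hGk k (seq k) ih).choose_spec.1
  have hagree : ∀ k, ∀ ξ < A k, (seq (k + 1)).1 ξ = (seq k).1 ξ := by
    intro k ξ hξ
    rw [hseq_succ, dif_pos (hInv k)]
    exact (step_exists E A hAs hGk k (seq k) (hInv k)).choose_spec.2.1 ξ hξ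
  have hRsub : ∀ k, (seq k).2 ⊆ (seq (k + 1)).2 := by
    intro k
    rw [hseq_succ, dif_pos (hInv k)]
    exact (step_exists E A hAs hGk k (seq k) (hInv k)).choose_spec.2.2
  have hAmono : ∀ {k j}, k ≤ j → A k ≤ A j := by
    intro k j h
    induction j, h using Nat.le_induction with
    | base => exact le_rfl
    | succ j hkj ih => exact le_trans ih (le_of_lt (hAs j))
  have hstab : ∀ k j, k ≤ j → ∀ ξ < A k, (seq j).1 ξ = (seq k).1 ξ := by
    intro k j h
    induction j, h using Nat.le_induction with
    | base => intro ξ _; rfl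
    | succ j hkj ih =>
      intro ξ hξ
      rw [hagree j ξ (lt_of_lt_of_le hξ (hAmono hkj))]
      exact ih ξ hξ
  have hRmono : ∀ k j, k ≤ j → (seq k).2 ⊆ (seq j).2 := by
    intro k j h
    induction j, h using Nat.le_induction with
    | base => exact Finset.Subset.refl _
    | succ j hkj ih => exact Finset.Subset.trans ih (hRsub j)
  set g : Ordinal → ℕ := fun ξ => if h : ξ < α then (seq (hAcof ξ h).choose).1 ξ else 0
    with hgdef
  have heval : ∀ ξ (h : ξ < α) k, ξ < A k → g ξ = (seq k).1 ξ := by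
    intro ξ h k hk
    have h1 : ξ < A (hAcof ξ h).choose := (hAcof ξ h).choose_spec
    set k₀ := (hAcof ξ h).choose
    have e1 : (seq (max k k₀)).1 ξ = (seq k₀).1 ξ := hstab k₀ _ (le_max_right _ _) ξ h1
    have e2 : (seq (max k k₀)).1 ξ = (seq k).1 ξ := hstab k _ (le_max_left _ _) ξ hk
    rw [hgdef]
    simp only [dif_pos h]
    rw [← e1, e2]
  refine ⟨g, ?_, ?_, ?_⟩
  · intro ξ₁ h₁ ξ₂ h₂ heq
    obtain ⟨k₁, hk₁⟩ := hAcof ξ₁ h₁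
    obtain ⟨k₂, hk₂⟩ := hAcof ξ₂ h₂
    have hm₁ : ξ₁ < A (max k₁ k₂) := lt_of_lt_of_le hk₁ (hAmono (le_max_left _ _))
    have hm₂ : ξ₂ < A (max k₁ k₂) := lt_of_lt_of_le hk₂ (hAmono (le_max_right _ _))
    rw [heval ξ₁ h₁ _ hm₁, heval ξ₂ h₂ _ hm₂] at heq
    exact (hInv (max k₁ k₂)).1 hm₁ hm₂ heq
  · -- co-infinite range
    have hsub : (⋃ k, ((seq k).2 : Set ℕ)) ⊆ {n : ℕ | ∀ ξ < α, g ξ ≠ n} := by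
      intro n hn
      obtain ⟨k, hk⟩ := Set.mem_iUnion.mp hn
      intro ξ hξ
      obtain ⟨k', hk'⟩ := hAcof ξ hξ
      have hm : ξ < A (max k k') := lt_of_lt_of_le hk' (hAmono (le_max_right _ _))
      rw [heval ξ hξ _ hm]
      exact (hInv (max k k')).2.2.1 n (hRmono k _ (le_max_left _ _) hk) ξ hm
    refine Set.Infinite.mono hsub ?_
    intro hfin
    have hfin' : (⋃ k, ((seq k).2 : Set ℕ)).Finite := hfin
    set F := hfin'.toFinset
    have hsub2 : (seq (F.card + 1)).2 ⊆ F := by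
      intro a ha
      rw [Set.Finite.mem_toFinset]
      exact Set.mem_iUnion.mpr ⟨F.card + 1, ha⟩
    have h1 : F.card + 1 ≤ (seq (F.card + 1)).2.card := (hInv (F.card + 1)).2.2.2
    have h2 : (seq (F.card + 1)).2.card ≤ F.card := Finset.card_le_card hsub2
    omega
  · intro β hβ
    obtain ⟨k, hk⟩ := hAcof β hβ
    have hfin1 : {ξ : Ordinal | ξ < A k ∧ (seq k).1 ξ ≠ E (A k) ξ}.Finite := (hInv k).2.1
    have hfin2 : {ξ : Ordinal | ξ < β ∧ E (A k) ξ ≠ E β ξ}.Finite :=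
      (hgood (A k) (hAlt k)).2.2 β hk
    refine (hfin1.union hfin2).subset ?_
    rintro ξ ⟨hξβ, hne⟩
    have hξα : ξ < α := lt_trans hξβ hβ
    have hξk : ξ < A k := lt_trans hξβ hk
    rw [heval ξ hξα k hξk] at hne
    by_cases h : (seq k).1 ξ = E (A k) ξ
    · exact Or.inr ⟨hξβ, fun he => hne (h.trans he)⟩
    · exact Or.inl ⟨hξk, h⟩

lemma exists_good (E : Ordinal → Ordinal → ℕ) (α : Ordinal) (hα : α < ω₁o)
    (hE : ∀ β < α, IsGoodAt E β (E β)) : ∃ g, IsGoodAt E α g := by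
  classical
  rcases Ordinal.zero_or_succ_or_isSuccLimit α with rfl | ⟨β₀, rfl⟩ | hlim
  · refine ⟨fun _ => 0, ?_, ?_, ?_⟩
    · intro ξ hξ; exact absurd hξ (not_lt_of_ge (zero_le (a := ξ)))
    · refine Set.infinite_univ.mono ?_
      intro n _ ξ hξ
      exact absurd hξ (not_lt_of_ge (zero_le (a := ξ)))
    · intro β hβ; exact absurd hβ (not_lt_of_ge (zero_le (a := β)))
  · -- successor case
    have hβ₀ : β₀ < Order.succ β₀ := Order.lt_succ β₀
    obtain ⟨hinj, hco, hcoh⟩ := hE β₀ hβ₀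
    obtain ⟨v, hv⟩ := hco.nonempty
    refine ⟨fun ξ => if ξ = β₀ then v else E β₀ ξ, ?_, ?_, ?_⟩
    · intro ξ₁ h₁ ξ₂ h₂ heq
      have h₁' : ξ₁ ≤ β₀ := Order.lt_succ_iff.mp h₁
      have h₂' : ξ₂ ≤ β₀ := Order.lt_succ_iff.mp h₂
      by_cases e₁ : ξ₁ = β₀ <;> by_cases e₂ : ξ₂ = β₀
      · rw [e₁, e₂]
      · simp only [if_pos e₁, if_neg e₂] at heq
        exact absurd heq.symm (hv ξ₂ (lt_of_le_of_ne h₂' e₂))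
      · simp only [if_neg e₁, if_pos e₂] at heq
        exact absurd heq (hv ξ₁ (lt_of_le_of_ne h₁' e₁))
      · simp only [if_neg e₁, if_neg e₂] at heq
        exact hinj (lt_of_le_of_ne h₁' e₁) (lt_of_le_of_ne h₂' e₂) heq
    · refine ((hco.diff (Set.finite_singleton v)).mono ?_)
      rintro n ⟨hn, hnv⟩
      intro ξ hξ
      by_cases e : ξ = β₀
      · simp only [if_pos e]
        exact fun h => hnv (h ▸ rfl)
      · simp only [if_neg e]
        exact hn ξ (lt_of_le_of_ne (Order.lt_succ_iff.mp hξ) e)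
    · intro β hβ
      have hβ' : β ≤ β₀ := Order.lt_succ_iff.mp hβ
      rcases lt_or_eq_of_le hβ' with hβlt | rfl
      · refine (hcoh β hβlt).subset ?_
        rintro ξ ⟨hξ, hne⟩
        have hne' : ξ ≠ β₀ := ne_of_lt (lt_trans hξ hβlt)
        simp only [if_neg hne'] at hne
        exact ⟨hξ, hne⟩
      · refine Set.finite_empty.subset ?_
        rintro ξ ⟨hξ, hne⟩
        simp only [if_neg (ne_of_lt hξ)] at hne
        exact absurd rfl hne
  · -- limit case
    have hcnt : (Set.Iio α).Countable := countable_Iio_of_lt hα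
    obtain ⟨b, hb⟩ := hcnt.exists_eq_range ⟨0, hlim.pos⟩
    have hbmem : ∀ k, b k < α := by
      intro k
      have : b k ∈ Set.Iio α := hb ▸ Set.mem_range_self k
      exact this
    let A : ℕ → Ordinal := fun k =>
      Nat.rec (Order.succ (b 0)) (fun k a => max (Order.succ a) (Order.succ (b (k + 1)))) k
    have hA0 : A 0 = Order.succ (b 0) := rfl
    have hAsucc : ∀ k, A (k + 1) = max (Order.succ (A k)) (Order.succ (b (k + 1))) :=
      fun k => rfl
    have hAlt : ∀ k, A k < α := by
      intro k
      induction k with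
      | zero => exact hlim.succ_lt (hbmem 0)
      | succ k ih =>
        rw [hAsucc]
        exact max_lt (hlim.succ_lt ih) (hlim.succ_lt (hbmem (k + 1)))
    have hAs : ∀ k, A k < A (k + 1) := by
      intro k
      rw [hAsucc]
      exact lt_of_lt_of_le (Order.lt_succ (A k)) (le_max_left _ _)
    have hAcof : ∀ ξ < α, ∃ k, ξ < A k := by
      intro ξ hξ
      have : ξ ∈ Set.range b := hb ▸ hξ
      obtain ⟨k, rfl⟩ := this
      cases k with
      | zero => exact ⟨0, Order.lt_succ _⟩
      | succ k =>
        refine ⟨k + 1, ?_⟩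
        rw [hAsucc]
        exact lt_of_lt_of_le (Order.lt_succ _) (le_max_right _ _)
    exact fusion E α A hAlt hAs hAcof hE

/-- The coherent sequence, defined by transfinite recursion. -/
def cohSeq : Ordinal.{0} → Ordinal → ℕ :=
  Ordinal.lt_wf.fix fun α prev =>
    if h : ∃ g, IsGoodAt (fun β => if hβ : β < α then prev β hβ else fun _ => 0) α g
    then h.choose else fun _ => 0

lemma cohSeq_good : ∀ α < ω₁o, IsGoodAt cohSeq α (cohSeq α) := by
  intro α
  induction α using Ordinal.induction with
  | h α IH =>
    intro hα
    set E' : Ordinal → Ordinal → ℕ := fun β => if hβ : β < α then cohSeq β else fun _ => 0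
      with hE'def
    have hE' : ∀ β < α, IsGoodAt E' β (E' β) := by
      intro β hβ
      have h1 : E' β = cohSeq β := dif_pos hβ
      rw [h1]
      refine isGoodAt_congr (fun ξ hξ => ?_) (IH β hβ (lt_trans hβ hα))
      simp only [hE'def, dif_pos (lt_trans hξ hβ)]
    have hex : ∃ g, IsGoodAt E' α g := exists_good E' α hα hE'
    have hunf : cohSeq α = (fun (α : Ordinal) (prev : ∀ β, β < α → Ordinal → ℕ) =>
        if h : ∃ g, IsGoodAt (fun β => if hβ : β < α then prev β hβ else fun _ => 0) α g
        then h.choose else fun _ => 0) α (fun β _ => cohSeq β) :=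
      WellFounded.fix_eq _ _ _
    dsimp only at hunf
    rw [← hE'def] at hunf
    rw [dif_pos hex] at hunf
    rw [hunf]
    refine isGoodAt_congr (fun β hβ => ?_) hex.choose_spec
    simp only [hE'def, dif_pos hβ]

end

end LuzinAux

open LuzinAux

/-- ω₁, the first uncountable ordinal, viewed as the set of all countable ordinals. -/
abbrev Omega1 := {o : Ordinal.{0} // o < (Cardinal.aleph 1).ord}

namespace LuzinAux

noncomputable section

open scoped Classical

/-- The decoding functions. -/
def phi (e : Ordinal → Ordinal → ℕ) (x : Omega1 → ℕ → ℕ) (n : ℕ) (α : Omega1) : Omega1 :=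
  if h : ∃ β : Omega1, β.1 < α.1 ∧ e α.1 β.1 = x α n then h.choose
  else ⟨0, omega1o_pos⟩

lemma phi_eq {e : Ordinal → Ordinal → ℕ} {x : Omega1 → ℕ → ℕ} {n : ℕ} {α β : Omega1}
    (hinj : Set.InjOn (e α.1) (Set.Iio α.1)) (hβ : β.1 < α.1) (hval : e α.1 β.1 = x α n) :
    phi e x n α = β := by
  have h : ∃ β : Omega1, β.1 < α.1 ∧ e α.1 β.1 = x α n := ⟨β, hβ, hval⟩
  unfold phi
  rw [dif_pos h]
  obtain ⟨h1, h2⟩ := h.choose_spec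
  exact Subtype.ext (hinj h1 hβ (h2.trans hval.symm))

lemma exists_unc_fiber {X Y : Type*} {S : Set X} (hS : ¬ S.Countable)
    {T : Set Y} (hT : T.Countable) (F : X → Y) (hF : ∀ a ∈ S, F a ∈ T) :
    ∃ b, ¬ {a | a ∈ S ∧ F a = b}.Countable := by
  by_contra h
  push_neg at h
  apply hS
  have hsub : S ⊆ ⋃ b ∈ T, {a | a ∈ S ∧ F a = b} := by
    intro a ha
    exact Set.mem_biUnion (hF a ha) ⟨ha, rfl⟩
  exact ((hT.biUnion fun b _ => h b)).mono hsub

lemma meagre_avoid (t : ℕ → ℕ) : IsMeagre {y : ℕ → ℕ | ∀ n, y n ≠ t n} := by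
  classical
  set M : Set (ℕ → ℕ) := {y : ℕ → ℕ | ∀ n, y n ≠ t n} with hMdef
  have hclosed : IsClosed M := by
    have : M = ⋂ n, (fun y : ℕ → ℕ => y n) ⁻¹' ({t n}ᶜ) := by
      ext y
      simp [hMdef]
    rw [this]
    refine isClosed_iInter fun n => ?_
    exact (isClosed_compl_iff.mpr (isOpen_discrete _)).preimage (continuous_apply n)
  have hint : interior M = ∅ := by
    rw [Set.eq_empty_iff_forall_notMem]
    intro y hy
    obtain ⟨U, hUM, hUopen, hyU⟩ := mem_interior.mp hy
    obtain ⟨F, u, h1, h2⟩ := (isOpen_pi_iff.mp hUopen) y hyU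
    obtain ⟨n₀, hn₀⟩ := Infinite.exists_notMem_finset F
    set z := Function.update y n₀ (t n₀) with hz
    have hzmem : z ∈ (F : Set ℕ).pi u := by
      intro i hi
      have : i ≠ n₀ := fun h => hn₀ (h ▸ hi)
      rw [hz, Function.update_of_ne this]
      exact (h1 i hi).2
    have : z ∈ M := hUM (h2 hzmem)
    exact this n₀ (by rw [hz, Function.update_self])
  rw [isMeagre_iff_countable_union_isNowhereDense]
  refine ⟨{M}, ?_, Set.countable_singleton M, ?_⟩
  · intro s hs
    rw [Set.mem_singleton_iff] at hs
    subst hs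
    rw [IsNowhereDense, hclosed.closure_eq, hint]
  · intro y hy
    exact ⟨M, rfl, hy⟩

end

end LuzinAux

/-- If there is a Luzin set in Baire space, then property (*) holds. -/
theorem luzin_implies_star
    (L : Set (ℕ → ℕ)) (hunc : ¬ L.Countable)
    (hL : ∀ M : Set (ℕ → ℕ), IsMeagre M → (L ∩ M).Countable) :
    ∃ φ : ℕ → Omega1 → Omega1,
      ∀ I : Set Omega1, #I = Cardinal.aleph 1 →
        ∃ n : ℕ, φ n '' I = Set.univ := by
  classical
  -- obtain an injective enumeration of ℵ₁-many elements of L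
  have hL1 : ℵ₀ < #↥L := by
    by_contra h
    exact hunc (Cardinal.le_aleph0_iff_set_countable.mp (not_lt.mp h))
  have hL2 : (Cardinal.aleph 1) ≤ #↥L := by
    rw [← Cardinal.succ_aleph0]
    exact Order.succ_le_of_lt hL1
  have hmkO : #Omega1 = Cardinal.lift.{1, 0} (Cardinal.aleph 1) := by
    have : #Omega1 = #↥(Set.Iio ((Cardinal.aleph 1).ord)) :=
      Cardinal.mk_congr (Equiv.subtypeEquivRight fun _ => Iff.rfl)
    rw [this, Ordinal.mk_Iio_ordinal, Cardinal.card_ord]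
  have hemb : Nonempty (Omega1 ↪ ↥L) := by
    rw [← Cardinal.lift_mk_le']
    rw [hmkO]
    simp only [Cardinal.lift_lift, Cardinal.lift_id]
    exact Cardinal.lift_le.mpr hL2
  obtain ⟨emb⟩ := hemb
  set x : Omega1 → (ℕ → ℕ) := fun α => (emb α : ℕ → ℕ) with hxdef
  have hxinj : Function.Injective x := fun a b h => emb.injective (Subtype.ext h)
  have hxL : ∀ α, x α ∈ L := fun α => (emb α).2
  refine ⟨phi cohSeq x, ?_⟩
  intro I hI
  by_contra hno
  push_neg at hno
  have hno' : ∀ n : ℕ, ∃ β : Omega1, β ∉ phi cohSeq x n '' I := by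
    intro n
    exact (Set.ne_univ_iff_exists_notMem _).mp (hno n)
  choose βf hβf using hno'
  -- a countable bound for all the βf n
  set γ : Ordinal := ⨆ n : ℕ, Order.succ (βf n).1 with hγdef
  have hγ : γ < ω₁o := by
    refine Ordinal.iSup_lt_ord ?_ ?_
    · show #ℕ < (Cardinal.aleph 1).ord.cof
      rw [Cardinal.isRegular_aleph_one.cof_eq, Cardinal.mk_nat]
      exact Cardinal.aleph0_lt_aleph_one
    · exact fun n => isLimit_omega1o.succ_lt (βf n).2
  have hγn : ∀ n, (βf n).1 < γ := fun n =>
    lt_of_lt_of_le (Order.lt_succ _) (Ordinal.le_iSup (fun n : ℕ => Order.succ (βf n).1) n)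
  have hIunc : ¬ I.Countable := by
    rw [Cardinal.countable_iff_lt_aleph_one, hI]
    exact lt_irrefl _
  -- the set of small elements is countable
  have hSγ : {α : Omega1 | α.1 < γ}.Countable := by
    have h1 : Countable ↥(Set.Iio γ) := by
      rw [← Cardinal.mk_le_aleph0_iff, Ordinal.mk_Iio_ordinal, ← Cardinal.lift_aleph0.{1, 0}]
      refine Cardinal.lift_le.mpr ?_
      rw [← Order.lt_succ_iff, Cardinal.succ_aleph0]
      exact Cardinal.lt_ord.mp hγ
    have hinjF : Function.Injective
        (fun a : {α : Omega1 | α.1 < γ} => (⟨a.1.1, a.2⟩ : ↥(Set.Iio γ))) := by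
      intro a b h
      have h2 : (⟨a.1.1, a.2⟩ : ↥(Set.Iio γ)) = ⟨b.1.1, b.2⟩ := h
      have h3 : a.1.1 = b.1.1 := Subtype.mk_eq_mk.mp h2
      exact Subtype.ext (Subtype.ext h3)
    exact Set.countable_coe_iff.mp (hinjF.countable)
  set I' : Set Omega1 := {α | α ∈ I ∧ γ ≤ α.1} with hI'def
  have hI'unc : ¬ I'.Countable := by
    intro h
    apply hIunc
    refine ((h.union hSγ).mono ?_)
    intro α hα
    rcases le_or_gt γ α.1 with hge | hlt
    · exact Or.inl ⟨hα, hge⟩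
    · exact Or.inr hlt
  -- the finite difference sets
  set Dset : Omega1 → Set Ordinal :=
    fun α => {ξ : Ordinal | ξ < γ ∧ cohSeq α.1 ξ ≠ cohSeq γ ξ} with hDdef
  have hDfin : ∀ α ∈ I', (Dset α).Finite := by
    intro α hα
    rcases eq_or_lt_of_le hα.2 with he | hlt
    · refine Set.finite_empty.subset ?_
      rintro ξ ⟨hξ, hne⟩
      exact absurd (by rw [← he]) hne
    · exact (cohSeq_good α.1 α.2).2.2 γ hlt
  have hDsub : ∀ α : Omega1, Dset α ⊆ Set.Iio γ := fun α ξ hξ => hξ.1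
  -- first pigeonhole: fix the difference set
  obtain ⟨D₀, hA₁⟩ := exists_unc_fiber hI'unc
    (Set.countable_setOf_finite_subset (countable_Iio_of_lt hγ)) Dset
    (fun α hα => ⟨hDfin α hα, hDsub α⟩)
  set A₁ : Set Omega1 := {a | a ∈ I' ∧ Dset a = D₀} with hA₁def
  have hA₁ne : A₁.Nonempty := by
    rcases Set.eq_empty_or_nonempty A₁ with h | h
    · exact absurd (h ▸ Set.countable_empty) hA₁
    · exact h
  obtain ⟨α₀, hα₀⟩ := hA₁ne
  have hD₀fin : D₀.Finite := hα₀.2 ▸ hDfin α₀ hα₀.1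
  haveI : Finite ↥D₀ := hD₀fin.to_subtype
  -- second pigeonhole: fix the values on D₀
  set Gmap : Omega1 → (↥D₀ → ℕ) := fun α d => cohSeq α.1 d.1 with hGdef
  obtain ⟨h₀, hA₂⟩ := exists_unc_fiber hA₁ Set.countable_univ Gmap
    (fun a _ => Set.mem_univ (Gmap a))
  set A₂ : Set Omega1 := {a | a ∈ A₁ ∧ Gmap a = h₀} with hA₂def
  -- the trap values
  set t : ℕ → ℕ := fun n =>
    if h : (βf n).1 ∈ D₀ then h₀ ⟨(βf n).1, h⟩ else cohSeq γ (βf n).1 with htdef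
  have hkey : ∀ a ∈ A₂, ∀ n, cohSeq a.1 (βf n).1 = t n := by
    intro a ha n
    obtain ⟨⟨haI', hDa⟩, hGa⟩ := ha
    by_cases h : (βf n).1 ∈ D₀
    · have h1 : t n = h₀ ⟨(βf n).1, h⟩ := dif_pos h
      have h2 : cohSeq a.1 (βf n).1 = Gmap a ⟨(βf n).1, h⟩ := rfl
      rw [h1, h2, hGa]
    · have h1 : t n = cohSeq γ (βf n).1 := dif_neg h
      rw [h1]
      by_contra hne
      exact h (hDa ▸ ⟨hγn n, hne⟩)
  have hneq : ∀ a ∈ A₂, ∀ n, x a n ≠ t n := by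
    intro a ha n heq
    have haI' : a ∈ I' := ha.1.1
    have hval : cohSeq a.1 (βf n).1 = x a n := (hkey a ha n).trans heq.symm
    have hβlt : (βf n).1 < a.1 := lt_of_lt_of_le (hγn n) haI'.2
    have := phi_eq (cohSeq_good a.1 a.2).1 hβlt hval
    exact hβf n ⟨a, haI'.1, this⟩
  -- conclude via the Luzin property
  have hM := hL _ (meagre_avoid t)
  have hsub : A₂ ⊆ x ⁻¹' (L ∩ {y : ℕ → ℕ | ∀ n, y n ≠ t n}) := by
    intro a ha
    exact ⟨hxL a, fun n => hneq a ha n⟩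
  exact hA₂ ((hM.preimage hxinj).mono hsub)
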